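/- arXiv:2210.11836 — 2 statements merged into one kernel-verified Lean document; each statement's English description precedes it below -/
import Mathlib

section
/- Let X be a type, let m be a natural number, and for each i = 1,…,m let L_i be a finite index set, h_i : X → (L_i → ℝ) a map, and α_i ≥ 0 a weight. Let d(x,y) := Σ_{i=1}^m (α_i/2) · Σ_{j ∈ L_i} |h_i(x)(j) − h_i(y)(j)|. Then for any σ² > 0 and l ≠ 0, the function K : X × X → ℝ defined by K(x,y) := σ² · exp(−d(x,y)/l²) is a positive semidefinite kernel on X: it is symmetric and for every n ∈ ℕ, every x₁,…,xₙ ∈ X and every c₁,…,cₙ ∈ ℝ, Σ_{i,j=1}^n c_i c_j K(x_i,x_j) ≥ 0. (This is the paper's Proposition 2: the Symbolical-Optimal-Transport kernel-kernel K_SOT is a proper p.s.d. kernel over the kernel-grammar generated kernel space.) -/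
open MeasureTheory

namespace SOTaux

def PSDq (n : ℕ) (M : Fin n → Fin n → ℝ) : Prop :=
  ∀ c : Fin n → ℝ, 0 ≤ ∑ i : Fin n, ∑ j : Fin n, c i * c j * M i j

lemma psd_min {n : ℕ} (b : Fin n → ℝ) (hb : ∀ i, 0 ≤ b i) :
    PSDq n (fun p q => min (b p) (b q)) := by
  intro c
  have hind : ∀ p q : Fin n, (fun x : ℝ => (c p * (Set.Ico (0:ℝ) (b p)).indicator 1 x) *
      (c q * (Set.Ico (0:ℝ) (b q)).indicator 1 x)) =
      (Set.Ico (0:ℝ) (min (b p) (b q))).indicator (fun _ => c p * c q) := by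
    intro p q
    funext x
    have hmem : x ∈ Set.Ico (0:ℝ) (min (b p) (b q)) ↔
        (x ∈ Set.Ico (0:ℝ) (b p) ∧ x ∈ Set.Ico (0:ℝ) (b q)) := by
      simp only [Set.mem_Ico, lt_min_iff]
      tauto
    by_cases h1 : x ∈ Set.Ico (0:ℝ) (b p) <;> by_cases h2 : x ∈ Set.Ico (0:ℝ) (b q) <;>
      simp [Set.indicator_apply, hmem, h1, h2]
  have hint : ∀ p q : Fin n, Integrable
      (fun x : ℝ => (c p * (Set.Ico (0:ℝ) (b p)).indicator 1 x) *
        (c q * (Set.Ico (0:ℝ) (b q)).indicator 1 x)) := by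
    intro p q
    rw [hind p q]
    exact (integrable_indicator_iff measurableSet_Ico).2
      (integrableOn_const measure_Ico_lt_top.ne)
  have key : ∀ p q : Fin n, (∫ x : ℝ, (c p * (Set.Ico (0:ℝ) (b p)).indicator 1 x) *
      (c q * (Set.Ico (0:ℝ) (b q)).indicator 1 x)) = c p * c q * min (b p) (b q) := by
    intro p q
    rw [hind p q, integral_indicator measurableSet_Ico]
    have hm : (0:ℝ) ≤ min (b p) (b q) := le_min (hb p) (hb q)
    simp [Real.volume_Ico, ENNReal.toReal_ofReal hm]
    rw [max_eq_left hm]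
    ring
  calc (0:ℝ) ≤ ∫ x : ℝ, (∑ p : Fin n, c p * (Set.Ico (0:ℝ) (b p)).indicator 1 x)^2 := by
        apply integral_nonneg; intro x; positivity
    _ = ∑ p : Fin n, ∑ q : Fin n, c p * c q * min (b p) (b q) := by
        have hsq : ∀ x : ℝ, (∑ p : Fin n, c p * (Set.Ico (0:ℝ) (b p)).indicator 1 x)^2 =
            ∑ p : Fin n, ∑ q : Fin n,
              (c p * (Set.Ico (0:ℝ) (b p)).indicator 1 x) *
              (c q * (Set.Ico (0:ℝ) (b q)).indicator 1 x) := by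
          intro x
          rw [sq, Finset.sum_mul_sum]
        simp_rw [hsq]
        rw [integral_finset_sum _ (fun p _ => integrable_finset_sum _ (fun q _ => hint p q))]
        refine Finset.sum_congr rfl (fun p _ => ?_)
        rw [integral_finset_sum _ (fun q _ => hint p q)]
        exact Finset.sum_congr rfl (fun q _ => key p q)

lemma psd_rankone_mul {n : ℕ} (f : Fin n → ℝ) {M : Fin n → Fin n → ℝ} (hM : PSDq n M) :
    PSDq n (fun p q => f p * f q * M p q) := by
  intro c
  have := hM (fun i => c i * f i)
  calc (0:ℝ) ≤ ∑ i : Fin n, ∑ j : Fin n, (c i * f i) * (c j * f j) * M i j := this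
    _ = ∑ i : Fin n, ∑ j : Fin n, c i * c j * (f i * f j * M i j) := by
        refine Finset.sum_congr rfl fun i _ => Finset.sum_congr rfl fun j _ => by ring

lemma psd_laplace {n : ℕ} (t : ℝ) (ht : 0 ≤ t) (a : Fin n → ℝ) :
    PSDq n (fun p q => Real.exp (-(t * |a p - a q|))) := by
  have hmin : ∀ p q : Fin n, Real.exp (-(t * |a p - a q|)) =
      Real.exp (-(t * a p)) * Real.exp (-(t * a q)) *
        min (Real.exp (2 * t * a p)) (Real.exp (2 * t * a q)) := by
    intro p q
    have hmono : Monotone (fun z : ℝ => Real.exp (2 * t * z)) := by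
      intro u v huv
      exact Real.exp_le_exp.2 (by nlinarith)
    rw [← hmono.map_min, ← Real.exp_add, ← Real.exp_add]
    congr 1
    rcases le_total (a p) (a q) with hle | hle
    · rw [min_eq_left hle, abs_of_nonpos (by linarith)]; ring
    · rw [min_eq_right hle, abs_of_nonneg (by linarith)]; ring
  have hpsd : PSDq n (fun p q => Real.exp (-(t * a p)) * Real.exp (-(t * a q)) *
      min (Real.exp (2 * t * a p)) (Real.exp (2 * t * a q))) :=
    psd_rankone_mul _ (psd_min _ (fun i => (Real.exp_pos _).le))
  intro c
  have := hpsd c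
  simpa only [← hmin] using this

lemma psd_schur {n : ℕ} {M N : Fin n → Fin n → ℝ}
    (hMsym : ∀ p q, M p q = M q p) (hM : PSDq n M) (hN : PSDq n N) :
    PSDq n (fun p q => M p q * N p q) := by
  classical
  have hpsd : (Matrix.of M).PosSemidef := by
    rw [Matrix.posSemidef_iff_dotProduct_mulVec]
    constructor
    · ext p q
      simp [Matrix.conjTranspose, hMsym p q]
    · intro x
      have := hM x
      simp only [dotProduct, Matrix.mulVec, Matrix.of_apply, star, Pi.star_apply,
        star_trivial]
      calc (0:ℝ) ≤ ∑ i : Fin n, ∑ j : Fin n, x i * x j * M i j := this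
        _ = ∑ i : Fin n, x i * ∑ j : Fin n, M i j * x j := by
            refine Finset.sum_congr rfl (fun i _ => ?_)
            rw [Finset.mul_sum]
            exact Finset.sum_congr rfl fun j _ => by ring
  obtain ⟨B, hB⟩ : ∃ B : Matrix (Fin n) (Fin n) ℝ, Matrix.of M = B.conjTranspose * B := by
    open scoped MatrixOrder in
    exact CStarAlgebra.nonneg_iff_eq_star_mul_self.mp hpsd.nonneg
  have hentry : ∀ p q, M p q = ∑ k : Fin n, B k p * B k q := by
    intro p q
    have := congrArg (fun A => A p q) hB
    simpa [Matrix.mul_apply, Matrix.conjTranspose_apply] using this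
  intro c
  have expand : ∀ p q : Fin n, c p * c q * (M p q * N p q) =
      ∑ k : Fin n, (c p * B k p) * (c q * B k q) * N p q := by
    intro p q
    rw [hentry p q, Finset.sum_mul, Finset.mul_sum]
    exact Finset.sum_congr rfl fun k _ => by ring
  calc (0:ℝ) ≤ ∑ k : Fin n, ∑ p : Fin n, ∑ q : Fin n,
        (c p * B k p) * (c q * B k q) * N p q :=
      Finset.sum_nonneg fun k _ => hN (fun i => c i * B k i)
    _ = ∑ p : Fin n, ∑ q : Fin n, c p * c q * (M p q * N p q) := by
      rw [Finset.sum_comm]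
      refine Finset.sum_congr rfl fun p _ => ?_
      rw [Finset.sum_comm]
      exact Finset.sum_congr rfl fun q _ => (expand p q).symm

lemma psd_prod {n : ℕ} {ι : Type*} (s : Finset ι) (F : ι → Fin n → Fin n → ℝ)
    (hsym : ∀ i p q, F i p q = F i q p) (hpsd : ∀ i, PSDq n (F i)) :
    (∀ p q, (∏ i ∈ s, F i p q) = ∏ i ∈ s, F i q p) ∧
      PSDq n (fun p q => ∏ i ∈ s, F i p q) := by
  classical
  induction s using Finset.induction with
  | empty =>
      refine ⟨fun p q => by simp, fun c => ?_⟩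
      simp only [Finset.prod_empty, mul_one]
      calc (0:ℝ) ≤ (∑ i : Fin n, c i)^2 := sq_nonneg _
        _ = ∑ i : Fin n, ∑ j : Fin n, c i * c j := by
            rw [sq, Finset.sum_mul_sum]
  | @insert a s' hx ih =>
      constructor
      · intro p q
        rw [Finset.prod_insert hx, Finset.prod_insert hx, hsym a p q, ih.1 p q]
      · have hs := psd_schur (M := F a) (N := fun p q => ∏ i ∈ s', F i p q)
          (hsym a) (hpsd a) ih.2
        intro c
        have h2 := hs c
        simpa only [Finset.prod_insert hx] using h2

end SOTaux
/-- Proposition 2: the SOT kernel-kernel `K(x,y) = σ² exp(−d(x,y)/l²)`, with `d`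
the weighted-sum-of-L1 pseudometric over feature maps, is a positive semidefinite
kernel on `X`. -/
theorem sot_kernel_kernel_is_psd
    {X : Type*} (m : ℕ) (L : Fin m → Type*) [∀ i, Fintype (L i)]
    (h : ∀ i : Fin m, X → (L i → ℝ)) (α : Fin m → ℝ) (hα : ∀ i, 0 ≤ α i)
    (d : X → X → ℝ)
    (hd : ∀ x y, d x y = ∑ i : Fin m, (α i / 2) * ∑ j : L i, |h i x j - h i y j|)
    (σ2 l : ℝ) (hσ2 : 0 < σ2) (hl : l ≠ 0)
    (K : X → X → ℝ)
    (hK : ∀ x y, K x y = σ2 * Real.exp (-(d x y) / l ^ 2)) :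
    (∀ x y, K x y = K y x) ∧
      (∀ n : ℕ, ∀ x : Fin n → X, ∀ c : Fin n → ℝ,
        0 ≤ ∑ i : Fin n, ∑ j : Fin n, c i * c j * K (x i) (x j)) := by
  have hl2 : (0:ℝ) < l ^ 2 := by positivity
  set t : Fin m → ℝ := fun i => α i / (2 * l ^ 2) with ht
  have htn : ∀ i, 0 ≤ t i := fun i => div_nonneg (hα i) (by positivity)
  have hdsym : ∀ x y, d x y = d y x := by
    intro x y
    rw [hd, hd]
    refine Finset.sum_congr rfl fun i _ => ?_
    congr 1
    exact Finset.sum_congr rfl fun j _ => abs_sub_comm _ _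
  have hKprod : ∀ x y, K x y =
      σ2 * ∏ i : Fin m, ∏ j : L i, Real.exp (-(t i * |h i x j - h i y j|)) := by
    intro x y
    rw [hK]
    congr 1
    have hprod : (∏ i : Fin m, ∏ j : L i, Real.exp (-(t i * |h i x j - h i y j|))) =
        Real.exp (∑ i : Fin m, ∑ j : L i, -(t i * |h i x j - h i y j|)) := by
      rw [Finset.prod_congr rfl (fun i (_ : i ∈ Finset.univ) =>
        (Real.exp_sum Finset.univ (fun j : L i => -(t i * |h i x j - h i y j|))).symm),
        ← Real.exp_sum]
    rw [hprod]
    congr 1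
    have hthis : ∀ i : Fin m, (∑ j : L i, -(t i * |h i x j - h i y j|)) =
        -((α i / 2) * (∑ j : L i, |h i x j - h i y j|) / l ^ 2) := by
      intro i
      rw [Finset.sum_neg_distrib]
      congr 1
      rw [← Finset.mul_sum]
      rw [ht]
      field_simp
    have hR : (∑ i : Fin m, ∑ j : L i, -(t i * |h i x j - h i y j|)) =
        -(∑ i : Fin m, (α i / 2) * (∑ j : L i, |h i x j - h i y j|) / l ^ 2) := by
      rw [Finset.sum_congr rfl (fun i _ => hthis i), Finset.sum_neg_distrib]
    rw [hR, hd, neg_div, Finset.sum_div]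
  constructor
  · intro x y
    rw [hK, hK, hdsym]
  · intro n x c
    have hF : ∀ i : Fin m, (∀ p q : Fin n,
        (∏ j : L i, Real.exp (-(t i * |h i (x p) j - h i (x q) j|))) =
        ∏ j : L i, Real.exp (-(t i * |h i (x p) j - h i (x q) j|))) ∧
        SOTaux.PSDq n (fun p q =>
          ∏ j : L i, Real.exp (-(t i * |h i (x p) j - h i (x q) j|))) :=
      fun i => ⟨fun p q => rfl, (SOTaux.psd_prod Finset.univ
        (fun j p q => Real.exp (-(t i * |h i (x p) j - h i (x q) j|)))
        (fun j p q => show Real.exp (-(t i * |h i (x p) j - h i (x q) j|)) =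
            Real.exp (-(t i * |h i (x q) j - h i (x p) j|)) from by
          rw [abs_sub_comm])
        (fun j => SOTaux.psd_laplace (t i) (htn i) (fun p => h i (x p) j))).2⟩
    have hFsym : ∀ (i : Fin m) (p q : Fin n),
        (∏ j : L i, Real.exp (-(t i * |h i (x p) j - h i (x q) j|))) =
        ∏ j : L i, Real.exp (-(t i * |h i (x q) j - h i (x p) j|)) :=
      fun i p q => Finset.prod_congr rfl fun j _ => by rw [abs_sub_comm]
    have hG : SOTaux.PSDq n (fun p q =>
        ∏ i : Fin m, ∏ j : L i, Real.exp (-(t i * |h i (x p) j - h i (x q) j|))) :=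
      (SOTaux.psd_prod Finset.univ
        (fun i p q => ∏ j : L i, Real.exp (-(t i * |h i (x p) j - h i (x q) j|)))
        (fun i p q => hFsym i p q)
        (fun i => (hF i).2)).2
    have hGc := hG c
    calc (0:ℝ) ≤ σ2 * ∑ p : Fin n, ∑ q : Fin n, c p * c q *
          ∏ i : Fin m, ∏ j : L i, Real.exp (-(t i * |h i (x p) j - h i (x q) j|)) :=
        mul_nonneg hσ2.le hGc
      _ = ∑ p : Fin n, ∑ q : Fin n, c p * c q * K (x p) (x q) := by
        rw [Finset.mul_sum]
        refine Finset.sum_congr rfl fun p _ => ?_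
        rw [Finset.mul_sum]
        refine Finset.sum_congr rfl fun q _ => ?_
        rw [hKprod]
        ring
end

section
/- Let X be a type and let K : X × X → ℝ be a positive semidefinite kernel on X. Then the pointwise exponential K'(x,y) := exp(K(x,y)) is a positive semidefinite kernel on X. -/
open Matrix in
/-- Schur product theorem, quadratic form version over ℝ. -/
lemma schur_form {n : ℕ} {A B : Matrix (Fin n) (Fin n) ℝ}
    (hA : A.PosSemidef) (hB : B.PosSemidef) (c : Fin n → ℝ) :
    0 ≤ ∑ i : Fin n, ∑ j : Fin n, c i * c j * (A i j * B i j) := by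
  obtain ⟨M, rfl⟩ : ∃ M : Matrix (Fin n) (Fin n) ℝ, A = Mᴴ * M := by
    open scoped MatrixOrder in
    exact ⟨CFC.sqrt A, by
      rw [(CFC.sqrt_nonneg A).posSemidef.1.eq]
      exact (CFC.sqrt_mul_sqrt_self A hA.nonneg).symm⟩
  have key : ∀ i j, (Mᴴ * M) i j = ∑ r : Fin n, M r i * M r j := by
    intro i j
    simp [Matrix.mul_apply, Matrix.conjTranspose_apply, mul_comm]
  calc (0:ℝ) ≤ ∑ r : Fin n, ∑ i : Fin n, ∑ j : Fin n,
        (c i * M r i) * (c j * M r j) * B i j := by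
        refine Finset.sum_nonneg fun r _ => ?_
        have := hB.2 (Finsupp.equivFunOnFinite.symm fun i => c i * M r i)
        simpa [Finsupp.sum_fintype, dotProduct, Matrix.mulVec, Finset.mul_sum, mul_assoc,
          mul_comm, mul_left_comm] using this
    _ = ∑ i : Fin n, ∑ j : Fin n, c i * c j * ((Mᴴ * M) i j * B i j) := by
        rw [Finset.sum_comm]
        refine Finset.sum_congr rfl fun i _ => ?_
        rw [Finset.sum_comm]
        refine Finset.sum_congr rfl fun j _ => ?_
        rw [key i j, Finset.sum_mul, Finset.mul_sum]
        exact Finset.sum_congr rfl fun r _ => by ring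

open Matrix in
lemma hadamard_psd {n : ℕ} {A B : Matrix (Fin n) (Fin n) ℝ}
    (hA : A.PosSemidef) (hB : B.PosSemidef) :
    Matrix.PosSemidef (Matrix.of fun i j => A i j * B i j) := by
  constructor
  · ext i j
    have h1 : A j i = A i j := by
      have := congrFun (congrFun hA.1 i) j; simpa using this
    have h2 : B j i = B i j := by
      have := congrFun (congrFun hB.1 i) j; simpa using this
    simp [Matrix.conjTranspose_apply, h1, h2]
  · intro v
    have := schur_form hA hB v
    simpa [Finsupp.sum_fintype, dotProduct, Matrix.mulVec, Finset.mul_sum, mul_assoc,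
      mul_comm, mul_left_comm] using this

open Matrix in
lemma pow_psd {n : ℕ} {A : Matrix (Fin n) (Fin n) ℝ} (hA : A.PosSemidef) (k : ℕ) :
    Matrix.PosSemidef (Matrix.of fun i j => A i j ^ k) := by
  induction k with
  | zero =>
    constructor
    · ext i j; simp [Matrix.conjTranspose_apply]
    · intro v
      have h : (v.sum fun i xi => v.sum fun j xj =>
            star xi * (Matrix.of fun (i j : Fin n) => A i j ^ 0) i j * xj)
          = (∑ i : Fin n, v i) * (∑ i : Fin n, v i) := by
        simp [Finsupp.sum_fintype, Finset.sum_mul_sum]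
      rw [h]
      exact mul_self_nonneg _
  | succ k ih =>
    have h := hadamard_psd ih hA
    have e : (Matrix.of fun i j => A i j ^ (k + 1))
        = Matrix.of fun i j => (Matrix.of fun i j => A i j ^ k) i j * A i j := by
      ext i j; simp [pow_succ]
    rw [e]; exact h

/-- The pointwise exponential of a positive semidefinite kernel is a positive
semidefinite kernel. -/
theorem psd_kernel_exp
    {X : Type*} (K : X → X → ℝ)
    (hsymm : ∀ x y, K x y = K y x)
    (hpsd : ∀ n : ℕ, ∀ x : Fin n → X, ∀ c : Fin n → ℝ,
      0 ≤ ∑ i : Fin n, ∑ j : Fin n, c i * c j * K (x i) (x j))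
    (K' : X → X → ℝ) (hK' : ∀ x y, K' x y = Real.exp (K x y)) :
    (∀ x y, K' x y = K' y x) ∧
      (∀ n : ℕ, ∀ x : Fin n → X, ∀ c : Fin n → ℝ,
        0 ≤ ∑ i : Fin n, ∑ j : Fin n, c i * c j * K' (x i) (x j)) := by
  constructor
  · intro x y; rw [hK', hK', hsymm]
  · intro n x c
    set A : Matrix (Fin n) (Fin n) ℝ := Matrix.of fun i j => K (x i) (x j) with hAdef
    have hA : A.PosSemidef := by
      constructor
      · ext i j
        simp only [Matrix.conjTranspose_apply, hAdef, Matrix.of_apply, star_trivial]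
        exact hsymm (x j) (x i)
      · intro v
        have := hpsd n x v
        simpa [Finsupp.sum_fintype, dotProduct, Matrix.mulVec, Finset.mul_sum, mul_assoc,
          mul_comm, mul_left_comm, hAdef] using this
    have hexp : ∀ i j, K' (x i) (x j) = ∑' k : ℕ, K (x i) (x j) ^ k / (Nat.factorial k : ℝ) := by
      intro i j
      rw [hK', Real.exp_eq_exp_ℝ, NormedSpace.exp_eq_tsum_div]
    have hsum : ∀ i j : Fin n, Summable (fun k : ℕ =>
        c i * c j * (K (x i) (x j) ^ k / (Nat.factorial k : ℝ))) := fun i j =>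
      Summable.mul_left _ (Real.summable_pow_div_factorial (K (x i) (x j)))
    calc (0:ℝ) ≤ ∑' k : ℕ, ∑ i : Fin n, ∑ j : Fin n,
          c i * c j * (K (x i) (x j) ^ k / (Nat.factorial k : ℝ)) := by
          refine tsum_nonneg fun k => ?_
          have hk := (pow_psd hA k).2
          have key : 0 ≤ ∑ i : Fin n, ∑ j : Fin n,
              c i * c j * (K (x i) (x j)) ^ k := by
            have := hk (Finsupp.equivFunOnFinite.symm c)
            simpa [Finsupp.sum_fintype, dotProduct, Matrix.mulVec, Finset.mul_sum, mul_assoc,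
              mul_comm, mul_left_comm, hAdef] using this
          have : ∑ i : Fin n, ∑ j : Fin n, c i * c j * (K (x i) (x j) ^ k / (Nat.factorial k : ℝ))
              = (∑ i : Fin n, ∑ j : Fin n, c i * c j * K (x i) (x j) ^ k) / (Nat.factorial k : ℝ) := by
            rw [Finset.sum_div]
            refine Finset.sum_congr rfl fun i _ => ?_
            rw [Finset.sum_div]
            refine Finset.sum_congr rfl fun j _ => ?_
            ring
          rw [this]
          exact div_nonneg key (by positivity)
      _ = ∑ i : Fin n, ∑ j : Fin n, ∑' k : ℕ,
          c i * c j * (K (x i) (x j) ^ k / (Nat.factorial k : ℝ)) := by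
          rw [Summable.tsum_finsetSum (fun i _ => summable_sum (fun j _ => hsum i j))]
          refine Finset.sum_congr rfl fun i _ => ?_
          rw [Summable.tsum_finsetSum (fun j _ => hsum i j)]
      _ = ∑ i : Fin n, ∑ j : Fin n, c i * c j * K' (x i) (x j) := by
          refine Finset.sum_congr rfl fun i _ => ?_
          refine Finset.sum_congr rfl fun j _ => ?_
          rw [tsum_mul_left, hexp i j]
end
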